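/- arXiv:2601.00972 — 2 statements merged into one kernel-verified Lean document; each statement's English description precedes it below -/
import Mathlib

section
/- Let C ⊆ F₂ⁿ be a linear code, let e ∈ F₂ⁿ, and let p be a real number with 0 < p < 1. Then Σ_{y ∈ C^⊥} (1−p)^{n − wt(e+y)} p^{wt(e+y)} = (1/|C|) · Σ_{z ∈ C} (−1)^{⟨e,z⟩} (1−2p)^{wt(z)}. -/
/-- Hamming weight of an `F₂`-vector. -/
def wt {n : ℕ} (x : Fin n → ZMod 2) : ℕ :=
  (Finset.univ.filter fun i => x i ≠ 0).card

/-- The `F₂` inner product `⟨x, z⟩ = Σᵢ xᵢ zᵢ`. -/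
def dot {n : ℕ} (x z : Fin n → ZMod 2) : ZMod 2 := ∑ i, x i * z i

/-- `(−1)^{⟨x,z⟩}`: `1` if `⟨x,z⟩ = 0` and `−1` otherwise. -/
def sgn {n : ℕ} (x z : Fin n → ZMod 2) : ℝ := if dot x z = 0 then 1 else -1

noncomputable def mm (a : ZMod 2) : ℝ := if a = 0 then 1 else -1

lemma mm_add (a b : ZMod 2) : mm (a + b) = mm a * mm b := by
  rcases (by decide : ∀ x : ZMod 2, x = 0 ∨ x = 1) a with rfl | rfl <;>
    rcases (by decide : ∀ x : ZMod 2, x = 0 ∨ x = 1) b with rfl | rfl <;>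
    simp only [mm, show (1 : ZMod 2) + 1 = 0 from rfl] <;> norm_num

lemma mm_sum {α : Type*} (s : Finset α) (g : α → ZMod 2) :
    mm (∑ i ∈ s, g i) = ∏ i ∈ s, mm (g i) := by
  classical
  induction s using Finset.induction with
  | empty => simp [mm]
  | insert a s h ih => rw [Finset.sum_insert h, Finset.prod_insert h, mm_add, ih]

lemma dot_add_right {n : ℕ} (w z z' : Fin n → ZMod 2) :
    dot w (z + z') = dot w z + dot w z' := by
  simp [dot, mul_add, Finset.sum_add_distrib]

open scoped Classical in
lemma char_sum {n : ℕ} (C : Submodule (ZMod 2) (Fin n → ZMod 2)) (w : Fin n → ZMod 2) :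
    ∑ z ∈ Finset.univ.filter (fun z : Fin n → ZMod 2 => z ∈ C), mm (dot w z)
    = if ∀ z ∈ C, dot w z = 0 then
        ((Finset.univ.filter (fun z : Fin n → ZMod 2 => z ∈ C)).card : ℝ) else 0 := by
  classical
  by_cases h : ∀ z ∈ C, dot w z = 0
  · rw [if_pos h]
    rw [Finset.sum_congr rfl (fun z hz => by
      simp only [Finset.mem_filter] at hz
      rw [h z hz.2])]
    simp [mm]
  · rw [if_neg h]
    push_neg at h
    obtain ⟨z₀, hz₀C, hz₀⟩ := h
    have hself : z₀ + z₀ = 0 := by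
      funext i; exact CharTwo.add_self_eq_zero _
    have hbij : ∑ z ∈ Finset.univ.filter (fun z : Fin n → ZMod 2 => z ∈ C), mm (dot w z)
        = ∑ z ∈ Finset.univ.filter (fun z : Fin n → ZMod 2 => z ∈ C), mm (dot w (z + z₀)) := by
      apply Finset.sum_nbij' (fun z => z + z₀) (fun z => z + z₀)
      · intro z hz
        simp only [Finset.mem_filter, Finset.mem_univ, true_and] at hz ⊢
        exact C.add_mem hz hz₀C
      · intro z hz
        simp only [Finset.mem_filter, Finset.mem_univ, true_and] at hz ⊢
        exact C.add_mem hz hz₀C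
      · intro z _; rw [add_assoc, hself, add_zero]
      · intro z _; rw [add_assoc, hself, add_zero]
      · intro z _; rw [add_assoc, hself, add_zero]
    have hneg : ∀ z, mm (dot w (z + z₀)) = - mm (dot w z) := by
      intro z
      rw [dot_add_right, mm_add]
      have : mm (dot w z₀) = -1 := by simp [mm, hz₀]
      rw [this]; ring
    rw [Finset.sum_congr rfl (fun z _ => hneg z), Finset.sum_neg_distrib] at hbij
    linarith

open scoped Classical in
lemma pow_wt {n : ℕ} (c : ℝ) (z : Fin n → ZMod 2) :
    ∏ i, (if z i = 0 then (1:ℝ) else c) = c ^ wt z := by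
  classical
  rw [Finset.prod_ite]
  simp [wt, Finset.prod_const]

open scoped Classical in
lemma card_eq_aux {n : ℕ} (v : Fin n → ZMod 2) :
    (Finset.univ.filter (fun i => v i = 0)).card = n - wt v := by
  classical
  have := Finset.card_filter_add_card_filter_not
    (s := (Finset.univ : Finset (Fin n))) (p := fun i => v i = 0)
  simp only [Finset.card_univ, Fintype.card_fin, not_not] at this
  have hw : wt v = (Finset.univ.filter (fun i => ¬ v i = 0)).card := rfl
  omega

open scoped Classical in
lemma prod_f {n : ℕ} (p : ℝ) (v : Fin n → ZMod 2) :
    ∏ i, (if v i = 0 then (1 - p) else p) = (1 - p) ^ (n - wt v) * p ^ wt v := by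
  classical
  rw [Finset.prod_ite]
  simp only [Finset.prod_const, card_eq_aux]
  rfl

open scoped Classical in
lemma g_eq (p : ℝ) (c : ZMod 2) :
    (if c = 0 then (1:ℝ) else (1 - 2*p))
      = ∑ b : ZMod 2, mm (b * c) * (if b = 0 then (1-p) else p) := by
  have huniv : (Finset.univ : Finset (ZMod 2)) = {0, 1} := by decide
  rw [huniv, Finset.sum_insert (by decide), Finset.sum_singleton]
  rcases (by decide : ∀ x : ZMod 2, x = 0 ∨ x = 1) c with rfl | rfl <;> norm_num [mm] <;> ring

open scoped Classical in
lemma expand {n : ℕ} (p : ℝ) (e z : Fin n → ZMod 2) :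
    sgn e z * (1 - 2*p) ^ wt z
      = ∑ x : Fin n → ZMod 2, mm (dot (e + x) z) * ∏ i, (if x i = 0 then (1-p) else p) := by
  classical
  calc sgn e z * (1 - 2*p) ^ wt z
      = ∏ i, (mm (e i * z i) * ∑ b : ZMod 2, mm (b * z i) * (if b = 0 then (1-p) else p)) := by
        rw [show sgn e z = mm (dot e z) from rfl, dot, mm_sum, ← pow_wt (1-2*p) z,
          ← Finset.prod_mul_distrib]
        exact Finset.prod_congr rfl fun i _ => by rw [← g_eq]
    _ = ∑ x ∈ Fintype.piFinset (fun _ : Fin n => (Finset.univ : Finset (ZMod 2))),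
          ∏ i, (mm (e i * z i) * (mm (x i * z i) * (if x i = 0 then (1-p) else p))) := by
        have h : ∀ i : Fin n, mm (e i * z i) * ∑ b : ZMod 2, mm (b * z i) *
            (if b = 0 then (1-p) else p) = ∑ b : ZMod 2, mm (e i * z i) * (mm (b * z i) *
            (if b = 0 then (1-p) else p)) := fun i => Finset.mul_sum _ _ _
        rw [Finset.prod_congr rfl fun i _ => h i, Finset.prod_univ_sum]
    _ = ∑ x : Fin n → ZMod 2, mm (dot (e + x) z) * ∏ i, (if x i = 0 then (1-p) else p) := by
        rw [Fintype.piFinset_univ]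
        refine Finset.sum_congr rfl fun x _ => ?_
        rw [show dot (e+x) z = ∑ i, (e i * z i + x i * z i) from by simp [dot, add_mul],
          mm_sum, ← Finset.prod_mul_distrib]
        exact Finset.prod_congr rfl fun i _ => by rw [mm_add]; ring


open scoped Classical in
/-- **Dual-code coset probabilities (MacWilliams/Fourier identity).**
For a linear code `C ⊆ F₂ⁿ`, `e ∈ F₂ⁿ` and `0 < p < 1`, the probability of the coset
`e + C^⊥` under the binary symmetric channel with crossover probability `p` equals
`(1/|C|) Σ_{z ∈ C} (−1)^{⟨e,z⟩} (1−2p)^{wt z}`. -/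
theorem dual_code_coset_probability
    (n : ℕ) (C : Submodule (ZMod 2) (Fin n → ZMod 2))
    (e : Fin n → ZMod 2) (p : ℝ) (hp0 : 0 < p) (hp1 : p < 1) :
    ∑ y ∈ Finset.univ.filter (fun y : Fin n → ZMod 2 => ∀ z ∈ C, dot y z = 0),
        (1 - p) ^ (n - wt (e + y)) * p ^ wt (e + y)
    = (1 / (Nat.card C : ℝ)) *
        ∑ z ∈ Finset.univ.filter (fun z : Fin n → ZMod 2 => z ∈ C),
          sgn e z * (1 - 2 * p) ^ wt z := by
  classical
  set S := Finset.univ.filter (fun z : Fin n → ZMod 2 => z ∈ C) with hS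
  have hN : (Nat.card C : ℕ) = S.card := by
    rw [Nat.card_eq_fintype_card, hS]
    exact Fintype.card_subtype _
  have hNpos : 0 < S.card := Finset.card_pos.2 ⟨0, by simp [hS, C.zero_mem]⟩
  have hcancel : ∀ v : Fin n → ZMod 2, e + (e + v) = v := by
    intro v; funext i
    show e i + (e i + v i) = v i
    rw [← add_assoc, CharTwo.add_self_eq_zero, zero_add]
  have key : ∑ z ∈ S, sgn e z * (1 - 2 * p) ^ wt z
      = (S.card : ℝ) * ∑ y ∈ Finset.univ.filter
            (fun y : Fin n → ZMod 2 => ∀ z ∈ C, dot y z = 0),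
          (1 - p) ^ (n - wt (e + y)) * p ^ wt (e + y) := by
    calc ∑ z ∈ S, sgn e z * (1 - 2 * p) ^ wt z
        = ∑ z ∈ S, ∑ x : Fin n → ZMod 2,
            mm (dot (e + x) z) * ∏ i, (if x i = 0 then (1 - p) else p) :=
          Finset.sum_congr rfl fun z _ => expand p e z
      _ = ∑ x : Fin n → ZMod 2,
            (∏ i, (if x i = 0 then (1 - p) else p)) * ∑ z ∈ S, mm (dot (e + x) z) := by
          rw [Finset.sum_comm]
          exact Finset.sum_congr rfl fun x _ => by
            rw [Finset.mul_sum]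
            exact Finset.sum_congr rfl fun z _ => mul_comm _ _
      _ = ∑ x : Fin n → ZMod 2, (∏ i, (if x i = 0 then (1 - p) else p)) *
            (if (∀ z ∈ C, dot (e + x) z = 0) then (S.card : ℝ) else 0) :=
          Finset.sum_congr rfl fun x _ => by rw [char_sum C (e + x)]
      _ = ∑ x ∈ Finset.univ.filter (fun x : Fin n → ZMod 2 => ∀ z ∈ C, dot (e + x) z = 0),
            (∏ i, (if x i = 0 then (1 - p) else p)) * (S.card : ℝ) := by
          rw [Finset.sum_filter]
          exact Finset.sum_congr rfl fun x _ => by rw [mul_ite, mul_zero]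
      _ = (S.card : ℝ) * ∑ y ∈ Finset.univ.filter
            (fun y : Fin n → ZMod 2 => ∀ z ∈ C, dot y z = 0),
          (1 - p) ^ (n - wt (e + y)) * p ^ wt (e + y) := by
          rw [Finset.mul_sum]
          apply Finset.sum_nbij' (fun x => e + x) (fun y => e + y)
          · intro x hx
            simp only [Finset.mem_filter, Finset.mem_univ, true_and] at hx ⊢
            exact hx
          · intro y hy
            simp only [Finset.mem_filter, Finset.mem_univ, true_and] at hy ⊢
            intro z hz
            rw [hcancel]
            exact hy z hz
          · intro x _; exact hcancel x
          · intro y _; exact hcancel y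
          · intro x _
            rw [hcancel, prod_f p x, mul_comm]
  rw [key, ← hN]
  have hne : ((Nat.card C : ℕ) : ℝ) ≠ 0 := by
    rw [hN]; exact_mod_cast hNpos.ne'
  field_simp
end

section
/- Let C, C' ⊆ F₂ⁿ be linear codes, let e, e' ∈ F₂ⁿ, and let p be a real number with 0 < p < 1. Then Σ_{y ∈ C^⊥} Σ_{y' ∈ C'^⊥} (1−p)^{n − wt((e+y) ∨ (e'+y'))} (p/3)^{wt((e+y) ∨ (e'+y'))} = (1/(|C|·|C'|)) · Σ_{z ∈ C} Σ_{z' ∈ C'} (−1)^{⟨e,z⟩ + ⟨e',z'⟩} (1 − 4p/3)^{wt(z ∨ z')}. -/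
/-- Coordinatewise OR of two `F₂`-vectors (coordinatewise maximum, viewing
coordinates in `{0,1}`). -/
def orv {n : ℕ} (x x' : Fin n → ZMod 2) : Fin n → ZMod 2 :=
  fun i => if x i = 0 ∧ x' i = 0 then 0 else 1

noncomputable section Aux

open Finset

/-- The real character of `ZMod 2`. -/
def ch (a : ZMod 2) : ℝ := if a = 0 then 1 else -1

lemma ch_add (a b : ZMod 2) : ch (a + b) = ch a * ch b := by
  have h : (1 + 1 : ZMod 2) = 0 := by decide
  have h01 : ∀ x : ZMod 2, x = 0 ∨ x = 1 := by decide
  rcases h01 a with rfl | rfl <;> rcases h01 b with rfl | rfl <;> simp [ch, h]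

lemma ch_sum {ι : Type*} (s : Finset ι) (f : ι → ZMod 2) :
    ch (∑ i ∈ s, f i) = ∏ i ∈ s, ch (f i) := by
  classical
  induction s using Finset.induction with
  | empty => simp [ch]
  | insert a s h ih => rw [Finset.sum_insert h, ch_add, ih, Finset.prod_insert h]

lemma sum_zmod2 (f : ZMod 2 → ℝ) : ∑ a : ZMod 2, f a = f 0 + f 1 := by
  rw [show (Finset.univ : Finset (ZMod 2)) = {0, 1} by decide]
  simp

open scoped Classical in
lemma wt_orv_eq {n : ℕ} (x x' : Fin n → ZMod 2) :
    wt (orv x x') = (univ.filter fun i => ¬(x i = 0 ∧ x' i = 0)).card := by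
  unfold wt orv
  congr 1
  apply Finset.filter_congr
  intro i _
  by_cases h : x i = 0 ∧ x' i = 0 <;> simp [h]

open scoped Classical in
lemma weight_prod {n : ℕ} (p : ℝ) (x x' : Fin n → ZMod 2) :
    (1 - p) ^ (n - wt (orv x x')) * (p / 3) ^ wt (orv x x') =
      ∏ i, (if x i = 0 ∧ x' i = 0 then (1 - p) else p / 3) := by
  rw [Finset.prod_ite, Finset.prod_const, Finset.prod_const, wt_orv_eq]
  congr 2
  have h := Finset.card_filter_add_card_filter_not
    (s := (univ : Finset (Fin n))) (p := fun i => x i = 0 ∧ x' i = 0)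
  simp only [Finset.card_univ, Fintype.card_fin] at h
  omega

open scoped Classical in
lemma prod_pow_orv {n : ℕ} (c : ℝ) (z z' : Fin n → ZMod 2) :
    ∏ i, (if z i = 0 ∧ z' i = 0 then (1 : ℝ) else c) = c ^ wt (orv z z') := by
  rw [Finset.prod_ite, Finset.prod_const, Finset.prod_const, one_pow, one_mul, wt_orv_eq]

/-- Per-coordinate Fourier computation. -/
lemma coord_sum (p : ℝ) (u v : ZMod 2) :
    ∑ a : ZMod 2, ∑ b : ZMod 2,
      (if a = 0 ∧ b = 0 then (1 - p) else p / 3) * (ch (a * u) * ch (b * v))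
    = (if u = 0 ∧ v = 0 then (1 : ℝ) else 1 - 4 * p / 3) := by
  have h01 : ∀ x : ZMod 2, x = 0 ∨ x = 1 := by decide
  rcases h01 u with rfl | rfl <;> rcases h01 v with rfl | rfl <;>
    simp only [sum_zmod2] <;> norm_num [ch] <;> ring

/-- The Fourier transform of the depolarizing weight function. -/
lemma lemA {n : ℕ} (p : ℝ) (z z' : Fin n → ZMod 2) :
    ∑ x : Fin n → ZMod 2, ∑ x' : Fin n → ZMod 2,
      ((1 - p) ^ (n - wt (orv x x')) * (p / 3) ^ wt (orv x x')) *
        ch (dot x z + dot x' z')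
    = (1 - 4 * p / 3) ^ wt (orv z z') := by
  classical
  have key : ∀ x x' : Fin n → ZMod 2,
      ((1 - p) ^ (n - wt (orv x x')) * (p / 3) ^ wt (orv x x')) *
        ch (dot x z + dot x' z')
      = ∏ i, ((if x i = 0 ∧ x' i = 0 then (1 - p) else p / 3) *
          (ch (x i * z i) * ch (x' i * z' i))) := by
    intro x x'
    rw [weight_prod, dot, dot, ch_add, ch_sum, ch_sum, ← Finset.prod_mul_distrib,
      ← Finset.prod_mul_distrib]
  simp only [key]
  set G : Fin n → ZMod 2 → ZMod 2 → ℝ := fun i a b =>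
    (if a = 0 ∧ b = 0 then (1 - p) else p / 3) * (ch (a * z i) * ch (b * z' i)) with hG
  have step1 : (∑ x : Fin n → ZMod 2, ∑ x' : Fin n → ZMod 2, ∏ i, G i (x i) (x' i))
      = ∑ x : Fin n → ZMod 2, ∏ i, ∑ b : ZMod 2, G i (x i) b :=
    Finset.sum_congr rfl fun x _ => (Fintype.prod_sum fun i b => G i (x i) b).symm
  have step2 : (∑ x : Fin n → ZMod 2, ∏ i, ∑ b : ZMod 2, G i (x i) b)
      = ∏ i, ∑ a : ZMod 2, ∑ b : ZMod 2, G i a b :=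
    (Fintype.prod_sum fun i a => ∑ b : ZMod 2, G i a b).symm
  rw [step1, step2, ← prod_pow_orv (1 - 4 * p / 3) z z']
  exact Finset.prod_congr rfl fun i _ => coord_sum p (z i) (z' i)

open scoped Classical in
/-- Character sum over a code. -/
lemma lemB {n : ℕ} (C : Submodule (ZMod 2) (Fin n → ZMod 2)) (y : Fin n → ZMod 2) :
    ∑ z ∈ univ.filter (fun z : Fin n → ZMod 2 => z ∈ C), ch (dot y z)
    = if (∀ z ∈ C, dot y z = 0) then (Nat.card C : ℝ) else 0 := by
  have dot_add : ∀ z z' : Fin n → ZMod 2, dot y (z + z') = dot y z + dot y z' := by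
    intro z z'
    simp [dot, mul_add, Finset.sum_add_distrib]
  by_cases h : ∀ z ∈ C, dot y z = 0
  · rw [if_pos h]
    rw [show ∑ z ∈ univ.filter (fun z : Fin n → ZMod 2 => z ∈ C), ch (dot y z)
        = ∑ _z ∈ univ.filter (fun z : Fin n → ZMod 2 => z ∈ C), (1 : ℝ) from
      Finset.sum_congr rfl fun z hz => by
        rw [Finset.mem_filter] at hz; rw [h z hz.2]; simp [ch]]
    simp only [Finset.sum_const, nsmul_eq_mul, mul_one]
    rw [Nat.card_eq_fintype_card, Fintype.card_subtype]
  · rw [if_neg h]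
    push_neg at h
    obtain ⟨z₀, hz₀C, hz₀⟩ := h
    have hz₀1 : dot y z₀ = 1 := by
      have : ∀ v : ZMod 2, v ≠ 0 → v = 1 := by decide
      exact this _ hz₀
    have hself : ∀ b : ZMod 2, b + b = 0 := by decide
    have hcancel : ∀ a : Fin n → ZMod 2, a + z₀ + z₀ = a := by
      intro a; funext i; simp [add_assoc, hself]
    have hbij : ∑ z ∈ univ.filter (fun z : Fin n → ZMod 2 => z ∈ C), ch (dot y z)
        = ∑ z ∈ univ.filter (fun z : Fin n → ZMod 2 => z ∈ C), ch (dot y (z + z₀)) := by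
      apply Finset.sum_nbij' (i := fun z => z + z₀) (j := fun z => z + z₀)
      · intro a ha
        rw [Finset.mem_filter] at ha ⊢
        exact ⟨Finset.mem_univ _, C.add_mem ha.2 hz₀C⟩
      · intro a ha
        rw [Finset.mem_filter] at ha ⊢
        exact ⟨Finset.mem_univ _, C.add_mem ha.2 hz₀C⟩
      · intro a _; exact hcancel a
      · intro a _; exact hcancel a
      · intro a _; rw [hcancel a]
    have hneg : ∑ z ∈ univ.filter (fun z : Fin n → ZMod 2 => z ∈ C), ch (dot y z)
        = - ∑ z ∈ univ.filter (fun z : Fin n → ZMod 2 => z ∈ C), ch (dot y z) := by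
      nth_rewrite 1 [hbij]
      rw [← Finset.sum_neg_distrib]
      apply Finset.sum_congr rfl
      intro z _
      rw [dot_add, hz₀1, ch_add]
      simp [ch]
    linarith
  
lemma sum_comm4 {ι κ μ ν : Type*} {M : Type*} [AddCommMonoid M]
    (s : Finset ι) (t : Finset κ) (u : Finset μ) (v : Finset ν)
    (a : ι → κ → μ → ν → M) :
    ∑ z ∈ s, ∑ z' ∈ t, ∑ x ∈ u, ∑ x' ∈ v, a z z' x x'
      = ∑ x ∈ u, ∑ x' ∈ v, ∑ z ∈ s, ∑ z' ∈ t, a z z' x x' := by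
  calc ∑ z ∈ s, ∑ z' ∈ t, ∑ x ∈ u, ∑ x' ∈ v, a z z' x x'
      = ∑ z ∈ s, ∑ x ∈ u, ∑ z' ∈ t, ∑ x' ∈ v, a z z' x x' :=
        Finset.sum_congr rfl fun z _ => Finset.sum_comm
    _ = ∑ x ∈ u, ∑ z ∈ s, ∑ z' ∈ t, ∑ x' ∈ v, a z z' x x' := Finset.sum_comm
    _ = ∑ x ∈ u, ∑ z ∈ s, ∑ x' ∈ v, ∑ z' ∈ t, a z z' x x' :=
        Finset.sum_congr rfl fun x _ => Finset.sum_congr rfl fun z _ => Finset.sum_comm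
    _ = ∑ x ∈ u, ∑ x' ∈ v, ∑ z ∈ s, ∑ z' ∈ t, a z z' x x' :=
        Finset.sum_congr rfl fun x _ => Finset.sum_comm

lemma ch_eq_ite (a : ZMod 2) {inst : Decidable (a = 0)} :
    ch a = @ite ℝ (a = 0) inst 1 (-1) := by
  by_cases h : a = 0 <;> simp [ch, h]

lemma dot_add_left {n : ℕ} (x y z : Fin n → ZMod 2) :
    dot (x + y) z = dot x z + dot y z := by
  simp [dot, add_mul, Finset.sum_add_distrib]

lemma cancel2 {n : ℕ} (e a : Fin n → ZMod 2) : e + (e + a) = a := by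
  have hself : ∀ b : ZMod 2, b + b = 0 := by decide
  funext i; simp [← add_assoc, hself]

end Aux

open scoped Classical in
/-- **Dual-code coset probabilities on the depolarizing channel.**
For linear codes `C, C' ⊆ F₂ⁿ`, `e, e' ∈ F₂ⁿ` and `0 < p < 1`, the probability of the
coset `(e,e') + C^⊥ × C'^⊥` under the channel where each coordinate pair is `(0,0)`
with probability `1−p` and each of `(0,1), (1,0), (1,1)` with probability `p/3`
equals `(1/(|C||C'|)) Σ_{z ∈ C} Σ_{z' ∈ C'} (−1)^{⟨e,z⟩+⟨e',z'⟩} (1−4p/3)^{wt(z ∨ z')}`. -/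
theorem dual_code_coset_probability_depolarizing
    (n : ℕ) (C C' : Submodule (ZMod 2) (Fin n → ZMod 2))
    (e e' : Fin n → ZMod 2) (p : ℝ) (hp0 : 0 < p) (hp1 : p < 1) :
    ∑ y ∈ Finset.univ.filter (fun y : Fin n → ZMod 2 => ∀ z ∈ C, dot y z = 0),
      ∑ y' ∈ Finset.univ.filter (fun y' : Fin n → ZMod 2 => ∀ z' ∈ C', dot y' z' = 0),
        (1 - p) ^ (n - wt (orv (e + y) (e' + y'))) * (p / 3) ^ wt (orv (e + y) (e' + y'))
    = (1 / ((Nat.card C : ℝ) * (Nat.card C' : ℝ))) *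
        ∑ z ∈ Finset.univ.filter (fun z : Fin n → ZMod 2 => z ∈ C),
          ∑ z' ∈ Finset.univ.filter (fun z' : Fin n → ZMod 2 => z' ∈ C'),
            (if dot e z + dot e' z' = 0 then (1 : ℝ) else -1) *
              (1 - 4 * p / 3) ^ wt (orv z z') := by
  classical
  have hN : (Nat.card C : ℝ) ≠ 0 := by
    have : 0 < Nat.card C := Nat.card_pos
    exact_mod_cast this.ne'
  have hN' : (Nat.card C' : ℝ) ≠ 0 := by
    have : 0 < Nat.card C' := Nat.card_pos
    exact_mod_cast this.ne'
  -- Step 1: reindex the left-hand side by `x = e + y`, `x' = e' + y'`.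
  have hL : (∑ y ∈ Finset.univ.filter (fun y : Fin n → ZMod 2 => ∀ z ∈ C, dot y z = 0),
      ∑ y' ∈ Finset.univ.filter (fun y' : Fin n → ZMod 2 => ∀ z' ∈ C', dot y' z' = 0),
        (1 - p) ^ (n - wt (orv (e + y) (e' + y'))) * (p / 3) ^ wt (orv (e + y) (e' + y')))
      = ∑ x ∈ Finset.univ.filter (fun x : Fin n → ZMod 2 => ∀ z ∈ C, dot (e + x) z = 0),
        ∑ x' ∈ Finset.univ.filter (fun x' : Fin n → ZMod 2 => ∀ z' ∈ C', dot (e' + x') z' = 0),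
          (1 - p) ^ (n - wt (orv x x')) * (p / 3) ^ wt (orv x x') := by
    apply Finset.sum_nbij' (i := fun y => e + y) (j := fun x => e + x)
    · intro a ha
      rw [Finset.mem_filter] at ha ⊢
      refine ⟨Finset.mem_univ _, fun z hz => ?_⟩
      rw [cancel2]; exact ha.2 z hz
    · intro a ha
      rw [Finset.mem_filter] at ha ⊢
      exact ⟨Finset.mem_univ _, fun z hz => ha.2 z hz⟩
    · intro a _; exact cancel2 e a
    · intro a _; exact cancel2 e a
    · intro a _
      apply Finset.sum_nbij' (i := fun y' => e' + y') (j := fun x' => e' + x')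
      · intro b hb
        rw [Finset.mem_filter] at hb ⊢
        refine ⟨Finset.mem_univ _, fun z hz => ?_⟩
        rw [cancel2]; exact hb.2 z hz
      · intro b hb
        rw [Finset.mem_filter] at hb ⊢
        exact ⟨Finset.mem_univ _, fun z hz => hb.2 z hz⟩
      · intro b _; exact cancel2 e' b
      · intro b _; exact cancel2 e' b
      · intro b _; rfl
  -- Step 2: the Fourier computation of the double code sum.
  have hS : (∑ z ∈ Finset.univ.filter (fun z : Fin n → ZMod 2 => z ∈ C),
      ∑ z' ∈ Finset.univ.filter (fun z' : Fin n → ZMod 2 => z' ∈ C'),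
        (if dot e z + dot e' z' = 0 then (1 : ℝ) else -1) * (1 - 4 * p / 3) ^ wt (orv z z'))
      = (Nat.card C : ℝ) * (Nat.card C' : ℝ) *
        ∑ x ∈ Finset.univ.filter (fun x : Fin n → ZMod 2 => ∀ z ∈ C, dot (e + x) z = 0),
        ∑ x' ∈ Finset.univ.filter (fun x' : Fin n → ZMod 2 => ∀ z' ∈ C', dot (e' + x') z' = 0),
          (1 - p) ^ (n - wt (orv x x')) * (p / 3) ^ wt (orv x x') := by
    calc ∑ z ∈ Finset.univ.filter (fun z : Fin n → ZMod 2 => z ∈ C),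
        ∑ z' ∈ Finset.univ.filter (fun z' : Fin n → ZMod 2 => z' ∈ C'),
          (if dot e z + dot e' z' = 0 then (1 : ℝ) else -1) * (1 - 4 * p / 3) ^ wt (orv z z')
        = ∑ z ∈ Finset.univ.filter (fun z : Fin n → ZMod 2 => z ∈ C),
          ∑ z' ∈ Finset.univ.filter (fun z' : Fin n → ZMod 2 => z' ∈ C'),
            ∑ x : Fin n → ZMod 2, ∑ x' : Fin n → ZMod 2,
              ((1 - p) ^ (n - wt (orv x x')) * (p / 3) ^ wt (orv x x')) *
                (ch (dot (e + x) z) * ch (dot (e' + x') z')) := by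
          refine Finset.sum_congr rfl fun z _ => Finset.sum_congr rfl fun z' _ => ?_
          rw [← ch_eq_ite, ← lemA (n := n) p z z', Finset.mul_sum]
          refine Finset.sum_congr rfl fun x _ => ?_
          rw [Finset.mul_sum]
          refine Finset.sum_congr rfl fun x' _ => ?_
          rw [dot_add_left, dot_add_left, ch_add, ch_add, ch_add, ch_add]
          ring
      _ = ∑ x : Fin n → ZMod 2, ∑ x' : Fin n → ZMod 2,
          ∑ z ∈ Finset.univ.filter (fun z : Fin n → ZMod 2 => z ∈ C),
          ∑ z' ∈ Finset.univ.filter (fun z' : Fin n → ZMod 2 => z' ∈ C'),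
            ((1 - p) ^ (n - wt (orv x x')) * (p / 3) ^ wt (orv x x')) *
              (ch (dot (e + x) z) * ch (dot (e' + x') z')) := sum_comm4 _ _ _ _ _
      _ = ∑ x : Fin n → ZMod 2, ∑ x' : Fin n → ZMod 2,
            ((1 - p) ^ (n - wt (orv x x')) * (p / 3) ^ wt (orv x x')) *
              ((if (∀ z ∈ C, dot (e + x) z = 0) then (Nat.card C : ℝ) else 0) *
               (if (∀ z' ∈ C', dot (e' + x') z' = 0) then (Nat.card C' : ℝ) else 0)) := by
          refine Finset.sum_congr rfl fun x _ => Finset.sum_congr rfl fun x' _ => ?_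
          rw [← lemB C (e + x), ← lemB C' (e' + x'), Finset.sum_mul_sum, Finset.mul_sum]
          refine Finset.sum_congr rfl fun z _ => ?_
          rw [Finset.mul_sum]
      _ = ∑ x ∈ Finset.univ.filter (fun x : Fin n → ZMod 2 => ∀ z ∈ C, dot (e + x) z = 0),
          ∑ x' ∈ Finset.univ.filter
              (fun x' : Fin n → ZMod 2 => ∀ z' ∈ C', dot (e' + x') z' = 0),
            ((1 - p) ^ (n - wt (orv x x')) * (p / 3) ^ wt (orv x x')) *
              ((Nat.card C : ℝ) * (Nat.card C' : ℝ)) := by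
          rw [Finset.sum_filter]
          refine Finset.sum_congr rfl fun x _ => ?_
          by_cases hx : ∀ z ∈ C, dot (e + x) z = 0
          · simp only [if_pos hx]
            rw [Finset.sum_filter]
            refine Finset.sum_congr rfl fun x' _ => ?_
            by_cases hx' : ∀ z' ∈ C', dot (e' + x') z' = 0
            · simp [hx', mul_comm]
            · simp [hx']
          · simp only [if_neg hx, zero_mul, mul_zero, Finset.sum_const_zero]
      _ = (Nat.card C : ℝ) * (Nat.card C' : ℝ) *
          ∑ x ∈ Finset.univ.filter (fun x : Fin n → ZMod 2 => ∀ z ∈ C, dot (e + x) z = 0),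
          ∑ x' ∈ Finset.univ.filter
              (fun x' : Fin n → ZMod 2 => ∀ z' ∈ C', dot (e' + x') z' = 0),
            (1 - p) ^ (n - wt (orv x x')) * (p / 3) ^ wt (orv x x') := by
          rw [Finset.mul_sum]
          refine Finset.sum_congr rfl fun x _ => ?_
          rw [Finset.mul_sum]
          refine Finset.sum_congr rfl fun x' _ => ?_
          ring
  rw [hL, hS]
  field_simp
end
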